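/- Suppose π is proper and S ⊆ 𝔛 is closed. Then the fiber map z ↦ S ∩ π⁻¹(z) is upper hemi-continuous at every z ∈ 𝒵. Furthermore, if 𝔛 and 𝒵 are Polish spaces, then the set of points z ∈ 𝒵 at which this fiber map is hemi-continuous is residual. -/

import Mathlib

open Set Filter Topology

/-- Upper hemi-continuity of a set-valued map at a point. -/
def UpperHemiAt {V W : Type*} [TopologicalSpace V] [TopologicalSpace W]
    (S : V → Set W) (v : V) : Prop :=
  ∀ W' : Set W, IsOpen W' → S v ⊆ W' →
    ∃ V₀ : Set V, IsOpen V₀ ∧ v ∈ V₀ ∧ ∀ v' ∈ V₀, S v' ⊆ W'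

/-- Lower hemi-continuity of a set-valued map at a point. -/
def LowerHemiAt {V W : Type*} [TopologicalSpace V] [TopologicalSpace W]
    (S : V → Set W) (v : V) : Prop :=
  ∀ W₁ : Set W, IsOpen W₁ → (W₁ ∩ S v).Nonempty →
    ∃ V₀ : Set V, IsOpen V₀ ∧ v ∈ V₀ ∧ ∀ v' ∈ V₀, (W₁ ∩ S v').Nonempty

/-- Hemi-continuity of a set-valued map at a point. -/
def HemiAt {V W : Type*} [TopologicalSpace V] [TopologicalSpace W]
    (S : V → Set W) (v : V) : Prop :=
  UpperHemiAt S v ∧ LowerHemiAt S v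

theorem stmt7 {𝔛 𝒵 : Type*} [TopologicalSpace 𝔛] [TopologicalSpace 𝒵]
    [T2Space 𝔛] [T2Space 𝒵]
    (π : 𝔛 → 𝒵) (hπc : Continuous π)
    -- π is proper: a closed map with compact fibers
    (hπclosed : IsClosedMap π) (hπfib : ∀ z : 𝒵, IsCompact (π ⁻¹' {z}))
    (S : Set 𝔛) (hS : IsClosed S) :
    -- the fiber map z ↦ S ∩ π⁻¹(z) is upper hemi-continuous at every point
    (∀ z : 𝒵, UpperHemiAt (fun z' : 𝒵 => S ∩ π ⁻¹' {z'}) z) ∧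
    -- if 𝔛 and 𝒵 are Polish, the set of hemi-continuity points is residual
    (PolishSpace 𝔛 → PolishSpace 𝒵 →
      {z : 𝒵 | HemiAt (fun z' : 𝒵 => S ∩ π ⁻¹' {z'}) z} ∈ residual 𝒵) := by
  have upper : ∀ z : 𝒵, UpperHemiAt (fun z' : 𝒵 => S ∩ π ⁻¹' {z'}) z := by
    intro z W' hW' hsub
    refine ⟨(π '' (S \ W'))ᶜ, (hπclosed _ (hS.sdiff hW')).isOpen_compl, ?_, ?_⟩
    · rintro ⟨x, ⟨hxS, hxW⟩, hxz⟩
      exact hxW (hsub ⟨hxS, hxz⟩)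
    · rintro z' hz' x ⟨hxS, hxz⟩
      by_contra hxW
      exact hz' ⟨x, ⟨hxS, hxW⟩, hxz⟩
  refine ⟨upper, ?_⟩
  intro hPX hPZ
  haveI := hPX; haveI := hPZ
  letI := TopologicalSpace.upgradeIsCompletelyMetrizable 𝔛
  have key : ∀ U : Set 𝔛, IsOpen U →
      IsMeagre (π '' (U ∩ S) \ interior (π '' (U ∩ S))) := by
    intro U hU
    obtain ⟨T, hTo, hTc, hTeq⟩ := (hU.isClosed_compl).isGδ
    rw [isMeagre_iff_countable_union_isNowhereDense]
    refine ⟨(fun t => π '' (tᶜ ∩ S) \ interior (π '' (U ∩ S))) '' T, ?_,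
      hTc.image _, ?_⟩
    · rintro s ⟨t, htT, rfl⟩
      have htU : tᶜ ⊆ U := by
        intro x hx
        by_contra hxU
        have : x ∈ ⋂₀ T := hTeq ▸ hxU
        exact hx (this t htT)
      have hcl : IsClosed (π '' (tᶜ ∩ S)) :=
        hπclosed _ (((hTo t htT).isClosed_compl).inter hS)
      have hsubA : π '' (tᶜ ∩ S) ⊆ π '' (U ∩ S) :=
        image_mono (inter_subset_inter_left _ htU)
      have hfr : π '' (tᶜ ∩ S) \ interior (π '' (U ∩ S)) ⊆ frontier (π '' (tᶜ ∩ S)) := by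
        rw [hcl.frontier_eq]
        exact diff_subset_diff_right (interior_mono hsubA)
      have : interior (closure (π '' (tᶜ ∩ S) \ interior (π '' (U ∩ S)))) = ∅ := by
        have h1 : closure (π '' (tᶜ ∩ S) \ interior (π '' (U ∩ S)))
            ⊆ frontier (π '' (tᶜ ∩ S)) :=
          closure_minimal hfr isClosed_frontier
        refine eq_empty_of_subset_empty ?_
        calc interior (closure (π '' (tᶜ ∩ S) \ interior (π '' (U ∩ S))))
            ⊆ interior (frontier (π '' (tᶜ ∩ S))) := interior_mono h1
          _ = ∅ := interior_frontier hcl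
      exact this
    · rintro z ⟨⟨x, ⟨hxU, hxS⟩, hxz⟩, hzint⟩
      have hx' : x ∉ ⋂₀ T := fun h => (hTeq ▸ h : x ∈ Uᶜ) hxU
      obtain ⟨t, htT, hxt⟩ := not_forall₂.mp hx'
      exact ⟨_, ⟨t, htT, rfl⟩, ⟨⟨x, ⟨hxt, hxS⟩, hxz⟩, hzint⟩⟩
  obtain ⟨B, hBc, _, hBbasis⟩ := TopologicalSpace.exists_countable_basis 𝔛
  have hres : (⋂ U ∈ B, (π '' (U ∩ S) \ interior (π '' (U ∩ S)))ᶜ) ∈ residual 𝒵 :=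
    (countable_bInter_mem hBc).mpr fun U hU => key U (hBbasis.isOpen hU)
  refine mem_of_superset hres ?_
  intro z hz
  refine ⟨upper z, ?_⟩
  rintro W₁ hW₁ ⟨x, hxW, hxS, hxz⟩
  obtain ⟨U, hUB, hxU, hUW⟩ := hBbasis.exists_subset_of_mem_open hxW hW₁
  have hzA : z ∈ π '' (U ∩ S) := ⟨x, ⟨hxU, hxS⟩, hxz⟩
  have hzint : z ∈ interior (π '' (U ∩ S)) := by
    by_contra h
    exact (mem_iInter₂.1 hz U hUB) ⟨hzA, h⟩
  refine ⟨interior (π '' (U ∩ S)), isOpen_interior, hzint, ?_⟩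
  intro z' hz'
  obtain ⟨x', ⟨hx'U, hx'S⟩, hx'z⟩ := interior_subset hz'
  exact ⟨x', hUW hx'U, hx'S, hx'z⟩
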